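/- (Lyapunov's theorem.) Let D ⊆ ℝⁿ be an open set containing the origin, let f : ℝⁿ → ℝⁿ be locally Lipschitz with f(0) = 0, and let V : ℝⁿ → ℝ be continuously differentiable on D with V(0) = 0, V(x) > 0 for all x ∈ D \ {0}, and ⟨∇V(x), f(x)⟩ < 0 for all x ∈ D \ {0}. Then the origin is asymptotically stable: (i) for every ε > 0 there exists δ > 0 such that every solution x(·) of ẋ = f(x) with ‖x(0)‖ < δ satisfies ‖x(t)‖ < ε for all t ≥ 0, and (ii) there exists δ₀ > 0 such that every solution x(·) of ẋ = f(x) with ‖x(0)‖ < δ₀ satisfies x(t) → 0 as t → ∞. -/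

import Mathlib

open Filter Topology

theorem lyapunov_asymptotic_stability {n : ℕ}
    (D : Set (EuclideanSpace ℝ (Fin n))) (hD : IsOpen D) (h0D : (0 : EuclideanSpace ℝ (Fin n)) ∈ D)
    (f : EuclideanSpace ℝ (Fin n) → EuclideanSpace ℝ (Fin n))
    (hf : LocallyLipschitz f) (hf0 : f 0 = 0)
    (V : EuclideanSpace ℝ (Fin n) → ℝ) (hV : ContDiffOn ℝ 1 V D)
    (hV0 : V 0 = 0) (hVpos : ∀ x ∈ D, x ≠ 0 → 0 < V x)
    (hVdot : ∀ x ∈ D, x ≠ 0 → inner ℝ (gradient V x) (f x) < (0 : ℝ)) :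
    (∀ ε > (0 : ℝ), ∃ δ > (0 : ℝ), ∀ sol : ℝ → EuclideanSpace ℝ (Fin n),
        (∀ t ≥ (0 : ℝ), HasDerivAt sol (f (sol t)) t) → ‖sol 0‖ < δ →
        ∀ t ≥ (0 : ℝ), ‖sol t‖ < ε) ∧
    (∃ δ₀ > (0 : ℝ), ∀ sol : ℝ → EuclideanSpace ℝ (Fin n),
        (∀ t ≥ (0 : ℝ), HasDerivAt sol (f (sol t)) t) → ‖sol 0‖ < δ₀ →
        Tendsto sol atTop (𝓝 0)) := by
  -- trivial case: subsingleton space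
  rcases eq_or_ne n 0 with hn | hn
  · subst hn
    haveI : Subsingleton (EuclideanSpace ℝ (Fin 0)) := by
      constructor; intro a b; ext i; exact absurd i.2 (by simp)
    constructor
    · intro ε hε
      refine ⟨ε, hε, fun sol _ _ t _ => ?_⟩
      have : sol t = 0 := Subsingleton.elim _ _
      simpa [this]
    · refine ⟨1, one_pos, fun sol _ _ => ?_⟩
      have : sol = fun _ => (0 : EuclideanSpace ℝ (Fin 0)) := funext fun t => Subsingleton.elim _ _
      rw [this]; exact tendsto_const_nhds
  haveI : Nonempty (Fin n) := ⟨⟨0, Nat.pos_of_ne_zero hn⟩⟩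
  haveI : Nontrivial (EuclideanSpace ℝ (Fin n)) := by infer_instance
  -- basic facts
  have hVdiff : ∀ x ∈ D, HasGradientAt V (gradient V x) x := fun x hx =>
    ((hV.differentiableOn one_ne_zero).differentiableAt (hD.mem_nhds hx)).hasGradientAt
  have hchain : ∀ (sol : ℝ → EuclideanSpace ℝ (Fin n)) (t : ℝ), sol t ∈ D → HasDerivAt sol (f (sol t)) t →
      HasDerivAt (fun s => V (sol s)) (inner ℝ (gradient V (sol t)) (f (sol t)) : ℝ) t := by
    intro sol t ht hsol
    have h1 := ((hVdiff _ ht).hasFDerivAt).comp_hasDerivAt t hsol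
    exact h1.congr_deriv (by simp [InnerProductSpace.toDual_apply_apply])
  have hVdotle : ∀ x ∈ D, inner ℝ (gradient V x) (f x) ≤ (0 : ℝ) := by
    intro x hx
    rcases eq_or_ne x 0 with rfl | hx0
    · simp [hf0]
    · exact (hVdot x hx hx0).le
  have hVnonneg : ∀ x ∈ D, 0 ≤ V x := by
    intro x hx
    rcases eq_or_ne x 0 with rfl | hx0
    · exact le_of_eq hV0.symm
    · exact (hVpos x hx hx0).le
  -- outer ball inside D
  obtain ⟨R, hR0, hRD⟩ : ∃ R > (0:ℝ), Metric.closedBall (0 : EuclideanSpace ℝ (Fin n)) R ⊆ D := by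
    obtain ⟨r, hr, hsub⟩ := Metric.isOpen_iff.mp hD 0 h0D
    exact ⟨r/2, by positivity, fun x hx =>
      hsub (Metric.mem_ball.mpr (lt_of_le_of_lt (Metric.mem_closedBall.mp hx) (by linarith)))⟩
  -- monotonicity of V along solutions
  have hanti : ∀ (sol : ℝ → EuclideanSpace ℝ (Fin n)), (∀ t ≥ (0:ℝ), HasDerivAt sol (f (sol t)) t) →
      ∀ a b : ℝ, 0 ≤ a → (∀ t ∈ Set.Icc a b, sol t ∈ D) →
      AntitoneOn (fun s => V (sol s)) (Set.Icc a b) := by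
    intro sol hsol a b ha hmem
    apply antitoneOn_of_deriv_nonpos (convex_Icc a b)
    · intro t ht
      exact ((hchain sol t (hmem t ht) (hsol t (ha.trans ht.1))).continuousAt).continuousWithinAt
    · intro t ht
      rw [interior_Icc] at ht
      exact ((hchain sol t (hmem t (Set.mem_Icc_of_Ioo ht))
        (hsol t (ha.trans ht.1.le))).differentiableAt).differentiableWithinAt
    · intro t ht
      rw [interior_Icc] at ht
      have h := hchain sol t (hmem t (Set.mem_Icc_of_Ioo ht)) (hsol t (ha.trans ht.1.le))
      rw [h.deriv]
      exact hVdotle _ (hmem t (Set.mem_Icc_of_Ioo ht))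
  -- continuity of V at 0
  have hVcont0 : ContinuousAt V 0 := (hV.continuousOn.continuousAt (hD.mem_nhds h0D))
  -- core stability statement
  have stab : ∀ ε : ℝ, 0 < ε → ε ≤ R → ∃ δ > (0:ℝ), δ ≤ ε ∧
      ∀ sol : ℝ → EuclideanSpace ℝ (Fin n), (∀ t ≥ (0:ℝ), HasDerivAt sol (f (sol t)) t) → ‖sol 0‖ < δ →
      ∀ t ≥ (0:ℝ), ‖sol t‖ < ε := by
    intro ε hε hεR
    -- minimum of V on sphere ε
    have hSD : Metric.sphere (0 : EuclideanSpace ℝ (Fin n)) ε ⊆ D := fun x hx =>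
      hRD (by rw [Metric.mem_closedBall, dist_zero_right, mem_sphere_zero_iff_norm.mp hx]; exact hεR)
    obtain ⟨x₀, hx₀S, hx₀min⟩ := (isCompact_sphere (0 : EuclideanSpace ℝ (Fin n)) ε).exists_isMinOn
      (NormedSpace.sphere_nonempty.mpr hε.le) (hV.continuousOn.mono hSD)
    have hx₀0 : x₀ ≠ 0 := by
      intro h
      rw [h, mem_sphere_zero_iff_norm, norm_zero] at hx₀S
      exact hε.ne hx₀S
    have hm : 0 < V x₀ := hVpos x₀ (hSD hx₀S) hx₀0
    -- δ from continuity of V at 0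
    obtain ⟨δ', hδ', hδ'V⟩ := Metric.continuousAt_iff.mp hVcont0 (V x₀) hm
    refine ⟨min δ' ε, lt_min hδ' hε, min_le_right _ _, ?_⟩
    intro sol hsol hsol0 t ht
    by_contra hcon
    push_neg at hcon
    set A : Set ℝ := {s | 0 ≤ s ∧ ε ≤ ‖sol s‖} with hA
    have hAne : A.Nonempty := ⟨t, ht, hcon⟩
    have hAbdd : BddBelow A := ⟨0, fun s hs => hs.1⟩
    have hAclosed : IsClosed A := by
      rw [← isSeqClosed_iff_isClosed]
      intro u s hu hus
      have hs0 : 0 ≤ s := le_of_tendsto_of_tendsto' tendsto_const_nhds hus fun k => (hu k).1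
      refine ⟨hs0, ?_⟩
      have hc : ContinuousAt sol s := (hsol s hs0).continuousAt
      have hnorm : Tendsto (fun k => ‖sol (u k)‖) atTop (𝓝 ‖sol s‖) :=
        (hc.tendsto.comp hus).norm
      exact le_of_tendsto_of_tendsto' tendsto_const_nhds hnorm fun k => (hu k).2
    set t₁ := sInf A with ht₁def
    have ht₁A : t₁ ∈ A := hAclosed.csInf_mem hAne hAbdd
    have ht₁0 : 0 ≤ t₁ := ht₁A.1
    have hsol0ε : ‖sol 0‖ < ε := lt_of_lt_of_le hsol0 (min_le_right _ _)
    have ht₁pos : 0 < t₁ := by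
      rcases ht₁0.lt_or_eq with h | h
      · exact h
      · exfalso; rw [← h] at ht₁A; exact absurd ht₁A.2 (not_le.mpr hsol0ε)
    have hlt : ∀ s, 0 ≤ s → s < t₁ → ‖sol s‖ < ε := by
      intro s hs0 hst
      by_contra h
      push_neg at h
      exact absurd (csInf_le hAbdd ⟨hs0, h⟩) (not_le.mpr hst)
    have ht₁eq : ‖sol t₁‖ = ε := by
      refine le_antisymm ?_ ht₁A.2
      have hcl : t₁ ∈ closure (Set.Ico (0:ℝ) t₁) := by
        rw [closure_Ico (ne_of_lt ht₁pos)]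
        exact ⟨ht₁0, le_rfl⟩
      haveI hne : (𝓝[Set.Ico (0:ℝ) t₁] t₁).NeBot := mem_closure_iff_nhdsWithin_neBot.mp hcl
      have hc : ContinuousAt (fun s => ‖sol s‖) t₁ :=
        continuous_norm.continuousAt.comp (hsol t₁ ht₁0).continuousAt
      refine le_of_tendsto ((hc.continuousWithinAt (s := Set.Ico (0:ℝ) t₁)).tendsto) ?_
      filter_upwards [self_mem_nhdsWithin] with s hs
      exact (hlt s hs.1 hs.2).le
    have hmemD : ∀ s ∈ Set.Icc (0:ℝ) t₁, sol s ∈ D := by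
      intro s hs
      apply hRD
      rw [Metric.mem_closedBall, dist_zero_right]
      rcases hs.2.lt_or_eq with h | h
      · exact le_trans (hlt s hs.1 h).le hεR
      · rw [h, ht₁eq]; exact hεR
    have hA1 := hanti sol hsol 0 t₁ le_rfl hmemD
    have h1 : V (sol t₁) ≤ V (sol 0) :=
      hA1 (Set.left_mem_Icc.mpr ht₁0) (Set.right_mem_Icc.mpr ht₁0) ht₁0
    have h2 : V (sol 0) < V x₀ := by
      have := hδ'V (x := sol 0) (by
        rw [dist_zero_right]; exact lt_of_lt_of_le hsol0 (min_le_left _ _))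
      rw [Real.dist_eq, hV0, sub_zero] at this
      exact lt_of_le_of_lt (le_abs_self _) this
    have h3 : V x₀ ≤ V (sol t₁) := hx₀min (mem_sphere_zero_iff_norm.mpr ht₁eq)
    linarith
  constructor
  · intro ε hε
    obtain ⟨δ, hδ, hδε, hst⟩ := stab (min ε R) (lt_min hε hR0) (min_le_right _ _)
    exact ⟨δ, hδ, fun sol hsol hsol0 t ht =>
      lt_of_lt_of_le (hst sol hsol hsol0 t ht) (min_le_left _ _)⟩
  -- asymptotic part
  obtain ⟨δ₀, hδ₀, hδ₀R, hst⟩ := stab R hR0 le_rfl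
  refine ⟨δ₀, hδ₀, ?_⟩
  intro sol hsol hsol0
  have hball : ∀ t ≥ (0:ℝ), ‖sol t‖ < R := hst sol hsol hsol0
  have hmemD : ∀ t : ℝ, 0 ≤ t → sol t ∈ D := fun t ht =>
    hRD (Metric.mem_closedBall.mpr (by rw [dist_zero_right]; exact (hball t ht).le))
  have hmono : ∀ s t : ℝ, 0 ≤ s → s ≤ t → V (sol t) ≤ V (sol s) := by
    intro s t hs hstle
    have := hanti sol hsol 0 t le_rfl (fun u hu => hmemD u hu.1)
    exact this ⟨hs, hstle⟩ ⟨hs.trans hstle, le_rfl⟩ hstle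
  set c := sInf ((fun t => V (sol t)) '' Set.Ici 0) with hc
  have himne : ((fun t => V (sol t)) '' Set.Ici 0).Nonempty := ⟨V (sol 0), 0, Set.self_mem_Ici, rfl⟩
  have himbdd : BddBelow ((fun t => V (sol t)) '' Set.Ici 0) := by
    refine ⟨0, ?_⟩
    rintro v ⟨t, ht, rfl⟩
    exact hVnonneg _ (hmemD t ht)
  have hcle : ∀ t : ℝ, 0 ≤ t → c ≤ V (sol t) := fun t ht =>
    csInf_le himbdd ⟨t, ht, rfl⟩
  have hc0 : 0 ≤ c := le_csInf himne (by rintro v ⟨t, ht, rfl⟩; exact hVnonneg _ (hmemD t ht))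
  -- W is continuous on D
  have hWcont : ContinuousOn (fun x => (inner ℝ (gradient V x) (f x) : ℝ)) D := by
    have h1 : ContinuousOn (fun x => gradient V x) D := by
      have := hV.continuousOn_fderiv_of_isOpen hD le_rfl
      exact ((InnerProductSpace.toDual ℝ (EuclideanSpace ℝ (Fin n))).symm.continuous.comp_continuousOn this)
    exact ContinuousOn.inner h1 (hf.continuous.continuousOn)
  -- c must be 0
  have hcz : c = 0 := by
    by_contra hcne
    have hcpos : 0 < c := hc0.lt_of_ne (Ne.symm hcne)
    obtain ⟨r, hr, hrV⟩ := Metric.continuousAt_iff.mp hVcont0 c hcpos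
    have hrlow : ∀ t : ℝ, 0 ≤ t → r ≤ ‖sol t‖ := by
      intro t ht
      by_contra h
      push_neg at h
      have := hrV (x := sol t) (by rwa [dist_zero_right])
      rw [Real.dist_eq, hV0, sub_zero] at this
      exact absurd (hcle t ht) (not_le.mpr (lt_of_le_of_lt (le_abs_self _) this))
    set K := Metric.closedBall (0 : EuclideanSpace ℝ (Fin n)) R \ Metric.ball (0 : EuclideanSpace ℝ (Fin n)) r with hK
    have hKD : K ⊆ D := fun x hx => hRD hx.1
    have hKcomp : IsCompact K := (isCompact_closedBall 0 R).diff Metric.isOpen_ball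
    have hsolK : ∀ t : ℝ, 0 ≤ t → sol t ∈ K := by
      intro t ht
      constructor
      · exact Metric.mem_closedBall.mpr (by rw [dist_zero_right]; exact (hball t ht).le)
      · rw [Metric.mem_ball, dist_zero_right, not_lt]
        exact hrlow t ht
    obtain ⟨y, hyK, hymax⟩ := hKcomp.exists_isMaxOn ⟨sol 0, hsolK 0 le_rfl⟩
      (hWcont.mono hKD)
    have hy0 : y ≠ 0 := by
      intro h
      have := hyK.2
      rw [h] at this
      exact this (Metric.mem_ball_self hr)
    set k := -(inner ℝ (gradient V y) (f y) : ℝ) with hk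
    have hkpos : 0 < k := by
      have := hVdot y (hKD hyK) hy0
      linarith
    -- decay: V(sol T) + k T ≤ V(sol 0)
    have hdecay : ∀ T : ℝ, 0 ≤ T → V (sol T) + k * T ≤ V (sol 0) := by
      intro T hT
      have hDg : ∀ s : ℝ, 0 ≤ s → HasDerivAt (fun x => V (sol x) + k * x)
          ((inner ℝ (gradient V (sol s)) (f (sol s)) : ℝ) + k) s := by
        intro s hs
        exact ((hchain sol s (hmemD s hs) (hsol s hs)).add ((hasDerivAt_id s).const_mul k)).congr_deriv (by simp)
      have hganti : AntitoneOn (fun s => V (sol s) + k * s) (Set.Icc 0 T) := by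
        apply antitoneOn_of_deriv_nonpos (convex_Icc 0 T)
        · intro s hs
          exact ((hDg s hs.1).continuousAt).continuousWithinAt
        · intro s hs
          rw [interior_Icc] at hs
          exact ((hDg s hs.1.le).differentiableAt).differentiableWithinAt
        · intro s hs
          rw [interior_Icc] at hs
          have h := hDg s hs.1.le
          rw [h.deriv]
          have hWle : (inner ℝ (gradient V (sol s)) (f (sol s)) : ℝ) ≤ -k := by
            have := hymax (hsolK s hs.1.le)
            simpa [hk] using this
          linarith
      have := hganti (Set.left_mem_Icc.mpr hT) (Set.right_mem_Icc.mpr hT) hT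
      simpa using this
    -- contradiction: take T large
    set T := (V (sol 0) + 1) / k with hT
    have hTpos : 0 < T := div_pos (by have := hVnonneg _ (hmemD 0 le_rfl); linarith) hkpos
    have := hdecay T hTpos.le
    rw [hT] at this
    have hkT : k * ((V (sol 0) + 1) / k) = V (sol 0) + 1 := by
      field_simp
    rw [hkT] at this
    have := hVnonneg _ (hmemD T hTpos.le)
    rw [hT] at this
    linarith
  -- conclude convergence
  rw [NormedAddCommGroup.tendsto_nhds_zero]
  intro ε hε
  set ε' := min ε R with hε'
  have hε'pos : 0 < ε' := lt_min hε hR0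
  set K' := Metric.closedBall (0 : EuclideanSpace ℝ (Fin n)) R \ Metric.ball (0 : EuclideanSpace ℝ (Fin n)) ε' with hK'
  have hK'D : K' ⊆ D := fun x hx => hRD hx.1
  have hK'comp : IsCompact K' := (isCompact_closedBall 0 R).diff Metric.isOpen_ball
  have hK'ne : K'.Nonempty := by
    obtain ⟨z, hz⟩ := (NormedSpace.sphere_nonempty (x := (0 : EuclideanSpace ℝ (Fin n)))).mpr hR0.le
    rw [mem_sphere_zero_iff_norm] at hz
    refine ⟨z, Metric.mem_closedBall.mpr (by rw [dist_zero_right, hz]), ?_⟩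
    rw [Metric.mem_ball, dist_zero_right, hz, not_lt]
    exact min_le_right _ _
  obtain ⟨w, hwK, hwmin⟩ := hK'comp.exists_isMinOn hK'ne (hV.continuousOn.mono hK'D)
  have hw0 : w ≠ 0 := by
    intro h
    have := hwK.2
    rw [h] at this
    exact this (Metric.mem_ball_self hε'pos)
  have hm₀ : 0 < V w := hVpos w (hK'D hwK) hw0
  obtain ⟨v, ⟨t₀, ht₀, rfl⟩, hvlt⟩ := exists_lt_of_csInf_lt himne (by rw [← hc, hcz]; exact hm₀)
  rw [eventually_atTop]
  refine ⟨t₀, fun t ht => ?_⟩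
  have hVt : V (sol t) < V w := lt_of_le_of_lt (hmono t₀ t ht₀ ht) hvlt
  by_contra h
  push_neg at h
  have hsolK' : sol t ∈ K' := by
    refine ⟨Metric.mem_closedBall.mpr ?_, ?_⟩
    · rw [dist_zero_right]; exact (hball t (ht₀.trans ht)).le
    · rw [Metric.mem_ball, dist_zero_right, not_lt]
      exact le_trans (min_le_left ε R) h
  exact absurd hVt (not_lt.mpr (hwmin hsolK'))
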